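/- arXiv:1602.01500 — 2 statements merged into one kernel-verified Lean document; each statement's English description precedes it below -/
import Mathlib

section
/- Let α > 0 and suppose either (a) f ∈ L¹_q(A_{q,a}) and g is bounded on A_{q,a}, or (b) α ≠ 1/2 and f, g ∈ L²_q(A_{q,a}). Then the fractional q-integration by parts formula ∫_0^a g(x) (I^α_{q,0^+}f)(x) d_q x = ∫_0^a f(x) (I^α_{q,a^-}g)(x) d_q x holds. -/
open Filter

noncomputable section

namespace QFrac

variable (q : ℝ)

/-- infinite q-shifted factorial `(z;q)_∞` -/
def pochInf (z : ℝ) : ℝ := ∏' n : ℕ, (1 - z * q ^ n)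

/-- generalized q-shifted factorial `(z;q)_ν = (z;q)_∞ / (z q^ν;q)_∞` -/
def poch (z ν : ℝ) : ℝ := pochInf q z / pochInf q (z * q ^ ν)

/-- finite q-shifted factorial `(z;q)_k` -/
def pochN (z : ℝ) (k : ℕ) : ℝ := ∏ i ∈ Finset.range k, (1 - z * q ^ i)

/-- q-Gamma function -/
def qGamma (α : ℝ) : ℝ := pochInf q q / pochInf q (q ^ α) * (1 - q) ^ (1 - α)

/-- Jackson q-integral `∫_0^a f(t) d_q t` -/
def jackson (a : ℝ) (f : ℝ → ℝ) : ℝ := (1 - q) * a * ∑' n : ℕ, q ^ n * f (a * q ^ n)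

/-- Jackson q-integral `∫_c^b f(t) d_q t` -/
def jacksonI (c b : ℝ) (f : ℝ → ℝ) : ℝ := jackson q b f - jackson q c f

/-- left-sided Riemann–Liouville q-fractional integral `I^α_{q,0^+}` -/
def Ileft (α : ℝ) (f : ℝ → ℝ) (x : ℝ) : ℝ :=
  x ^ (α - 1) / qGamma q α * jackson q x (fun t => poch q (q * t / x) (α - 1) * f t)

/-- right-sided Riemann–Liouville q-fractional integral `I^α_{q,b^-}` -/
def Iright (b α : ℝ) (f : ℝ → ℝ) (x : ℝ) : ℝ :=
  (qGamma q α)⁻¹ *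
    jacksonI q (q * x) b (fun t => t ^ (α - 1) * poch q (q * x / t) (α - 1) * f t)

/-- Jackson q-derivative -/
def Dq (f : ℝ → ℝ) (x : ℝ) : ℝ := (f x - f (q * x)) / ((1 - q) * x)

/-- Jackson `q⁻¹`-derivative -/
def Dqinv (f : ℝ → ℝ) (x : ℝ) : ℝ := (f x - f (x / q)) / ((1 - q⁻¹) * x)

/-- left-sided Caputo q-fractional derivative of order `α ∈ (0,1)` -/
def CDleft (α : ℝ) (f : ℝ → ℝ) : ℝ → ℝ := Ileft q (1 - α) (Dq q f)

/-- left-sided Riemann–Liouville q-fractional derivative of order `α ∈ (0,1)` -/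
def DRLleft (α : ℝ) (f : ℝ → ℝ) : ℝ → ℝ := Dq q (Ileft q (1 - α) f)

/-- right-sided Riemann–Liouville q-fractional derivative of order `α ∈ (0,1)` -/
def DRLright (b α : ℝ) (f : ℝ → ℝ) (x : ℝ) : ℝ :=
  (-1 / q) * Dqinv q (fun t => Iright q b (1 - α) f t) x

/-- right-sided Caputo q-fractional derivative of order `α ∈ (0,1)` -/
def CDright (b α : ℝ) (f : ℝ → ℝ) (x : ℝ) : ℝ :=
  (-1 / q) * Iright q b (1 - α) (Dqinv q f) x

/-- `f ∈ L¹_q(A^*_{q,a})` -/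
def MemL1 (a : ℝ) (f : ℝ → ℝ) : Prop := Summable (fun n : ℕ => q ^ n * |f (a * q ^ n)|)

/-- `f ∈ L²_q(A^*_{q,a})` -/
def MemL2 (a : ℝ) (f : ℝ → ℝ) : Prop := Summable (fun n : ℕ => q ^ n * (f (a * q ^ n)) ^ 2)

/-- the `L²_q` norm -/
def norm2 (a : ℝ) (f : ℝ → ℝ) : ℝ := Real.sqrt (jackson q a (fun t => (f t) ^ 2))

/-- `f` is q-regular at zero (its value at `0` is the limit along the q-grid) -/
def qRegular (a : ℝ) (f : ℝ → ℝ) : Prop :=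
  Tendsto (fun n : ℕ => f (a * q ^ n)) atTop (nhds (f 0))

/-- the limit at zero along the q-grid exists -/
def qRegular' (a : ℝ) (f : ℝ → ℝ) : Prop :=
  ∃ L : ℝ, Tendsto (fun n : ℕ => f (a * q ^ n)) atTop (nhds L)

/-- sup norm on `A^*_{q,a}` -/
def supNorm (a : ℝ) (f : ℝ → ℝ) : ℝ := max (⨆ n : ℕ, |f (a * q ^ n)|) |f 0|

/-- bounded q-variation part of q-absolute continuity -/
def qACvar (a : ℝ) (f : ℝ → ℝ) : Prop :=
  ∃ K : ℝ, ∀ m N : ℕ,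
    ∑ j ∈ Finset.range N, |f (a * q ^ (m + j)) - f (a * q ^ (m + j + 1))| ≤ K

/-- q-absolute continuity on `A^*_{q,a}` -/
def qAC (a : ℝ) (f : ℝ → ℝ) : Prop := qRegular q a f ∧ qACvar q a f

/-- little q-Jacobi polynomial `p_n(x; q^A, q^B | q)` -/
def littleJacobi (n : ℕ) (A B x : ℝ) : ℝ :=
  ∑ k ∈ Finset.range (n + 1),
    pochN q (q ^ (-(n : ℝ))) k * pochN q (q ^ (A + B + (n : ℝ) + 1)) k /
      (pochN q (q ^ (A + 1)) k * pochN q q k) * (q * x) ^ k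

end QFrac

namespace QFracAux

lemma log_summable {q z : ℝ} (hq0 : 0 < q) (hq1 : q < 1) (hz0 : 0 ≤ z) (hz1 : z < 1) :
    Summable fun n : ℕ => Real.log (1 - z * q ^ n) := by
  have hb : ∀ n : ℕ, |Real.log (1 - z * q ^ n)| ≤ (1 - z)⁻¹ * (z * q ^ n) := by
    intro n
    have hqn : 0 < q ^ n := pow_pos hq0 n
    have hqn1 : q ^ n ≤ 1 := pow_le_one₀ hq0.le hq1.le
    have hx0 : 0 ≤ z * q ^ n := mul_nonneg hz0 hqn.le
    have hxz : z * q ^ n ≤ z := by nlinarith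
    have h1 : 0 < 1 - z * q ^ n := by linarith
    have h1z : 0 < 1 - z := by linarith
    have hlog_le : Real.log (1 - z * q ^ n) ≤ 0 :=
      Real.log_nonpos (by linarith) (by linarith)
    have h2 : -Real.log (1 - z * q ^ n) ≤ z * q ^ n / (1 - z * q ^ n) := by
      rw [← Real.log_inv]
      calc Real.log (1 - z * q ^ n)⁻¹ ≤ (1 - z * q ^ n)⁻¹ - 1 :=
            Real.log_le_sub_one_of_pos (inv_pos.mpr h1)
        _ = z * q ^ n / (1 - z * q ^ n) := by field_simp; ring
    have h3 : z * q ^ n / (1 - z * q ^ n) ≤ (1 - z)⁻¹ * (z * q ^ n) := by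
      rw [inv_mul_eq_div]
      gcongr
    rw [abs_of_nonpos hlog_le]
    linarith
  have hs : Summable fun n : ℕ => (1 - z)⁻¹ * (z * q ^ n) :=
    (((summable_geometric_of_lt_one hq0.le hq1).mul_left z).mul_left _)
  exact summable_abs_iff.mp
    (Summable.of_nonneg_of_le (fun n => abs_nonneg _) hb hs)

lemma hasProd_pochInf {q z : ℝ} (hq0 : 0 < q) (hq1 : q < 1) (hz0 : 0 ≤ z) (hz1 : z < 1) :
    HasProd (fun n : ℕ => 1 - z * q ^ n)
      (Real.exp (∑' n : ℕ, Real.log (1 - z * q ^ n))) := by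
  have hpos : ∀ n : ℕ, 0 < 1 - z * q ^ n := by
    intro n
    have hqn1 : q ^ n ≤ 1 := pow_le_one₀ hq0.le hq1.le
    nlinarith [pow_pos hq0 n]
  have h := (log_summable hq0 hq1 hz0 hz1).hasSum.rexp
  have he : (Real.exp ∘ fun n : ℕ => Real.log (1 - z * q ^ n)) = fun n : ℕ => 1 - z * q ^ n := by
    funext n; simp [Function.comp, Real.exp_log (hpos n)]
  rwa [he] at h

lemma pochInf_eq {q z : ℝ} (hq0 : 0 < q) (hq1 : q < 1) (hz0 : 0 ≤ z) (hz1 : z < 1) :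
    QFrac.pochInf q z = Real.exp (∑' n : ℕ, Real.log (1 - z * q ^ n)) :=
  (hasProd_pochInf hq0 hq1 hz0 hz1).tprod_eq

lemma pochInf_pos {q z : ℝ} (hq0 : 0 < q) (hq1 : q < 1) (hz0 : 0 ≤ z) (hz1 : z < 1) :
    0 < QFrac.pochInf q z := by
  rw [pochInf_eq hq0 hq1 hz0 hz1]; exact Real.exp_pos _

lemma pochInf_le_one {q z : ℝ} (hq0 : 0 < q) (hq1 : q < 1) (hz0 : 0 ≤ z) (hz1 : z < 1) :
    QFrac.pochInf q z ≤ 1 := by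
  rw [pochInf_eq hq0 hq1 hz0 hz1, Real.exp_le_one_iff]
  refine tsum_nonpos fun n => ?_
  have hqn1 : q ^ n ≤ 1 := pow_le_one₀ hq0.le hq1.le
  refine Real.log_nonpos ?_ ?_
  · nlinarith [pow_pos hq0 n]
  · nlinarith [pow_pos hq0 n]

lemma pochInf_anti {q z z' : ℝ} (hq0 : 0 < q) (hq1 : q < 1) (hz0 : 0 ≤ z)
    (hzz' : z ≤ z') (hz'1 : z' < 1) :
    QFrac.pochInf q z' ≤ QFrac.pochInf q z := by
  have hz'0 : 0 ≤ z' := le_trans hz0 hzz'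
  have hz1 : z < 1 := lt_of_le_of_lt hzz' hz'1
  rw [pochInf_eq hq0 hq1 hz0 hz1, pochInf_eq hq0 hq1 hz'0 hz'1, Real.exp_le_exp]
  refine Summable.tsum_le_tsum (fun n => ?_) (log_summable hq0 hq1 hz'0 hz'1)
    (log_summable hq0 hq1 hz0 hz1)
  have hqn1 : q ^ n ≤ 1 := pow_le_one₀ hq0.le hq1.le
  have hqn : 0 < q ^ n := pow_pos hq0 n
  refine Real.log_le_log ?_ ?_
  · nlinarith
  · nlinarith

lemma pochInf_eq_zero {q z : ℝ} (n : ℕ) (h : z * q ^ n = 1) :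
    QFrac.pochInf q z = 0 := by
  have hp : HasProd (fun m : ℕ => 1 - z * q ^ m) 0 := by
    rw [HasProd]
    have hev : ∀ᶠ s : Finset ℕ in atTop, (∏ i ∈ s, (1 - z * q ^ i)) = 0 := by
      filter_upwards [Filter.eventually_ge_atTop ({n} : Finset ℕ)] with s hs
      exact Finset.prod_eq_zero (hs (Finset.mem_singleton_self n)) (by rw [h]; ring)
    exact (Filter.tendsto_congr' hev).mpr tendsto_const_nhds
  exact hp.tprod_eq

end QFracAux

namespace QFracAux

lemma c_nonneg_le {q α : ℝ} (hq0 : 0 < q) (hq1 : q < 1) (hα : 0 < α) (k : ℕ) :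
    0 ≤ QFrac.poch q (q ^ (k + 1)) (α - 1) ∧
      QFrac.poch q (q ^ (k + 1)) (α - 1) ≤ (QFrac.pochInf q (q ^ α))⁻¹ := by
  have hz0 : (0:ℝ) ≤ q ^ (k + 1) := (pow_pos hq0 _).le
  have hz1 : q ^ (k + 1) < 1 := pow_lt_one₀ hq0.le hq1 (Nat.succ_ne_zero k)
  have hw : q ^ (k + 1) * q ^ (α - 1) = q ^ ((k : ℝ) + α) := by
    rw [← Real.rpow_natCast q (k + 1), ← Real.rpow_add hq0]
    congr 1; push_cast; ring
  have hwa : (0:ℝ) ≤ q ^ ((k : ℝ) + α) := (Real.rpow_pos_of_pos hq0 _).le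
  have hw1 : q ^ ((k : ℝ) + α) < 1 := Real.rpow_lt_one hq0.le hq1 (by positivity)
  have hwα : q ^ ((k : ℝ) + α) ≤ q ^ α :=
    Real.rpow_le_rpow_of_exponent_ge hq0 hq1.le (le_add_of_nonneg_left (Nat.cast_nonneg k))
  have hα0 : (0:ℝ) ≤ q ^ α := (Real.rpow_pos_of_pos hq0 α).le
  have hα1 : q ^ α < 1 := Real.rpow_lt_one hq0.le hq1 hα
  have hnum0 : 0 < QFrac.pochInf q (q ^ (k + 1)) := pochInf_pos hq0 hq1 hz0 hz1
  have hnum1 : QFrac.pochInf q (q ^ (k + 1)) ≤ 1 := pochInf_le_one hq0 hq1 hz0 hz1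
  have hden : 0 < QFrac.pochInf q (q ^ ((k : ℝ) + α)) := pochInf_pos hq0 hq1 hwa hw1
  have hmono : QFrac.pochInf q (q ^ α) ≤ QFrac.pochInf q (q ^ ((k : ℝ) + α)) :=
    pochInf_anti hq0 hq1 hwa hwα hα1
  rw [QFrac.poch, hw]
  constructor
  · exact div_nonneg hnum0.le hden.le
  · rw [inv_eq_one_div]
    exact div_le_div₀ zero_le_one hnum1 (pochInf_pos hq0 hq1 hα0 hα1) hmono

lemma rpow_key {q : ℝ} (α : ℝ) (hq0 : 0 < q) (n : ℕ) :
    ((q : ℝ) ^ n) ^ (α - 1) * q ^ n = (q ^ α) ^ n := by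
  have h1 : ((q : ℝ) ^ n) ^ (α - 1) * q ^ n = q ^ ((n : ℝ) * (α - 1) + n) := by
    rw [← Real.rpow_natCast q n, ← Real.rpow_mul hq0.le, ← Real.rpow_add hq0]
  have h2 : ((q : ℝ) ^ α) ^ n = q ^ (α * (n : ℝ)) := by
    rw [← Real.rpow_natCast (q ^ α) n, ← Real.rpow_mul hq0.le]
  rw [h1, h2]
  congr 1; ring

end QFracAux

set_option maxHeartbeats 2000000

/-- fractional q-integration by parts
`∫_0^a g · I^α_{q,0^+}f = ∫_0^a f · I^α_{q,a^-}g`. -/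
theorem stmt11 (q a α : ℝ) (hq : 0 < q) (hq1 : q < 1) (ha : 0 < a) (hα : 0 < α)
    (f g : ℝ → ℝ)
    (h : (QFrac.MemL1 q a f ∧ ∃ C : ℝ, ∀ n : ℕ, |g (a * q ^ n)| ≤ C) ∨
      (α ≠ 1 / 2 ∧ QFrac.MemL2 q a f ∧ QFrac.MemL2 q a g)) :
    QFrac.jackson q a (fun x => g x * QFrac.Ileft q α f x) =
      QFrac.jackson q a (fun x => f x * QFrac.Iright q a α g x) := by
  classical
  have h1q : 0 < 1 - q := by linarith
  have hqα0 : (0:ℝ) < q ^ α := Real.rpow_pos_of_pos hq α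
  have hqα1 : q ^ α < 1 := Real.rpow_lt_one hq.le hq1 hα
  have hΓ : 0 < QFrac.qGamma q α := by
    have h1 := QFracAux.pochInf_pos hq hq1 hq.le hq1
    have h2 := QFracAux.pochInf_pos hq hq1 hqα0.le hqα1
    have h3 : (0:ℝ) < (1 - q) ^ (1 - α) := Real.rpow_pos_of_pos h1q _
    rw [QFrac.qGamma]
    positivity
  set Γ := QFrac.qGamma q α with hΓdef
  set r := q ^ α with hrdef
  have hr0 : (0:ℝ) ≤ r := hqα0.le
  have hr1 : r < 1 := hqα1
  have hpt : ∀ n : ℕ, (0:ℝ) < a * q ^ n := fun n => mul_pos ha (pow_pos hq n)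
  set c : ℕ → ℝ := fun k => QFrac.poch q (q ^ (k + 1)) (α - 1) with hcdef
  set C0 : ℝ := (QFrac.pochInf q r)⁻¹ with hC0def
  have hcb : ∀ k, 0 ≤ c k ∧ c k ≤ C0 := by
    intro k
    have h := QFracAux.c_nonneg_le hq hq1 hα k
    rw [← hrdef] at h
    simpa only [hcdef, hC0def] using h
  have hC0 : 0 ≤ C0 := le_trans (hcb 0).1 (hcb 0).2
  set E : ℝ := a ^ (α - 1) * ((1 - q) * a) / Γ with hEdef
  have hE : 0 ≤ E := by
    apply div_nonneg _ hΓ.le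
    have h4 : (0:ℝ) ≤ a ^ (α - 1) := (Real.rpow_pos_of_pos ha _).le
    positivity
  set T : ℕ × ℕ → ℝ := fun p =>
    q ^ p.1 * g (a * q ^ p.1) *
        ((a * q ^ p.1) ^ (α - 1) / Γ * ((1 - q) * (a * q ^ p.1))) *
      (q ^ p.2 * (c p.2 * f (a * q ^ (p.1 + p.2)))) with hTdef
  have hTval : ∀ n k : ℕ, T (n, k) =
      E * c k * r ^ n * q ^ n * q ^ k * g (a * q ^ n) * f (a * q ^ (n + k)) := by
    intro n k
    have hkey := QFracAux.rpow_key α hq n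
    rw [← hrdef] at hkey
    have hmr : (a * q ^ n) ^ (α - 1) = a ^ (α - 1) * ((q : ℝ) ^ n) ^ (α - 1) :=
      Real.mul_rpow ha.le (pow_pos hq n).le
    simp only [hTdef, hEdef]
    rw [hmr]
    calc q ^ n * g (a * q ^ n) *
          (a ^ (α - 1) * ((q : ℝ) ^ n) ^ (α - 1) / Γ * ((1 - q) * (a * q ^ n))) *
          (q ^ k * (c k * f (a * q ^ (n + k))))
        = (a ^ (α - 1) * ((1 - q) * a) / Γ * c k * q ^ n * q ^ k * g (a * q ^ n) *
            f (a * q ^ (n + k))) * (((q : ℝ) ^ n) ^ (α - 1) * q ^ n) := by ring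
      _ = (a ^ (α - 1) * ((1 - q) * a) / Γ * c k * q ^ n * q ^ k * g (a * q ^ n) *
            f (a * q ^ (n + k))) * r ^ n := by rw [hkey]
      _ = a ^ (α - 1) * ((1 - q) * a) / Γ * c k * r ^ n * q ^ n * q ^ k * g (a * q ^ n) *
            f (a * q ^ (n + k)) := by ring
  have hTabs : ∀ n k : ℕ, |T (n, k)| =
      E * c k * r ^ n * q ^ n * q ^ k * (|g (a * q ^ n)| * |f (a * q ^ (n + k))|) := by
    intro n k
    have hnn : (0:ℝ) ≤ E * c k * r ^ n * q ^ n * q ^ k :=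
      mul_nonneg (mul_nonneg (mul_nonneg (mul_nonneg hE (hcb k).1)
        (pow_nonneg hr0 n)) (pow_nonneg hq.le n)) (pow_nonneg hq.le k)
    rw [hTval n k, show E * c k * r ^ n * q ^ n * q ^ k * g (a * q ^ n) * f (a * q ^ (n + k))
        = (E * c k * r ^ n * q ^ n * q ^ k) * (g (a * q ^ n) * f (a * q ^ (n + k))) from by ring,
      abs_mul, abs_of_nonneg hnn, abs_mul]
  -- Summability of T
  have hsumT : Summable T := by
    rcases h with ⟨hf1, C, hgC⟩ | ⟨-, hf2, hg2⟩
    · -- branch (a)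
      have hC : 0 ≤ C := le_trans (abs_nonneg _) (hgC 0)
      set v : ℕ → ℝ := fun j => q ^ j * |f (a * q ^ j)| with hvdef
      have hv : Summable v := hf1
      have hvn : ∀ j, 0 ≤ v j := by
        intro j; simp only [hvdef]; positivity
      have hVb : ∀ n : ℕ, (∑' k : ℕ, v (n + k)) ≤ ∑' j, v j := by
        intro n
        have he : (∑' k : ℕ, v (n + k)) = ∑' k : ℕ, v (k + n) :=
          tsum_congr fun k => by rw [add_comm]
        have h2 := Summable.sum_add_tsum_nat_add (f := v) n hv
        have h3 : 0 ≤ ∑ i ∈ Finset.range n, v i := Finset.sum_nonneg fun i _ => hvn i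
        rw [he]; linarith
      have hvs : ∀ n : ℕ, Summable fun k => v (n + k) := fun n =>
        hv.comp_injective (add_right_injective n)
      have hWs : Summable fun p : ℕ × ℕ => (E * C0 * C) * (r ^ p.1 * v (p.1 + p.2)) := by
        apply Summable.mul_left
        refine (summable_prod_of_nonneg ?_).mpr ⟨?_, ?_⟩
        · intro p; exact mul_nonneg (pow_nonneg hr0 _) (hvn _)
        · intro n
          show Summable fun k : ℕ => r ^ n * v (n + k)
          exact (hvs n).mul_left _
        · show Summable fun n : ℕ => ∑' k : ℕ, r ^ n * v (n + k)
          have heq : ∀ n : ℕ, (∑' k : ℕ, r ^ n * v (n + k)) = r ^ n * ∑' k, v (n + k) :=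
            fun n => tsum_mul_left
          refine Summable.of_nonneg_of_le (fun n => ?_) (fun n => ?_)
            ((summable_geometric_of_lt_one hr0 hr1).mul_left (∑' j, v j))
          · rw [heq n]; exact mul_nonneg (pow_nonneg hr0 _) (tsum_nonneg fun k => hvn _)
          · rw [heq n]
            calc r ^ n * ∑' k, v (n + k) ≤ r ^ n * ∑' j, v j :=
                  mul_le_mul_of_nonneg_left (hVb n) (pow_nonneg hr0 n)
              _ = (∑' j, v j) * r ^ n := by ring
      refine summable_abs_iff.mp
        (Summable.of_nonneg_of_le (fun p => abs_nonneg _) (fun p => ?_) hWs)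
      obtain ⟨n, k⟩ := p
      rw [hTabs n k]
      have h0X : (0:ℝ) ≤ E * r ^ n * q ^ n * q ^ k := by positivity
      have hb1 : c k * (|g (a * q ^ n)| * |f (a * q ^ (n + k))|)
          ≤ C0 * (C * |f (a * q ^ (n + k))|) :=
        mul_le_mul (hcb k).2
          (mul_le_mul_of_nonneg_right (hgC n) (abs_nonneg _))
          (by positivity) hC0
      calc E * c k * r ^ n * q ^ n * q ^ k * (|g (a * q ^ n)| * |f (a * q ^ (n + k))|)
          = (E * r ^ n * q ^ n * q ^ k) * (c k * (|g (a * q ^ n)| * |f (a * q ^ (n + k))|)) := by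
            ring
        _ ≤ (E * r ^ n * q ^ n * q ^ k) * (C0 * (C * |f (a * q ^ (n + k))|)) :=
            mul_le_mul_of_nonneg_left hb1 h0X
        _ = (E * C0 * C) * (r ^ n * v (n + k)) := by simp only [hvdef]; ring
    · -- branch (b)
      set s := Real.sqrt q with hsdef
      have hs0 : 0 < s := Real.sqrt_pos.mpr hq
      have hs2 : s ^ 2 = q := Real.sq_sqrt hq.le
      have hs1 : s < 1 := by nlinarith
      have hsqrtpow : ∀ j : ℕ, Real.sqrt (q ^ j) = s ^ j := by
        intro j
        rw [← hs2, ← pow_mul, mul_comm 2 j, pow_mul, Real.sqrt_sq (pow_nonneg hs0.le j)]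
      have hfb : ∀ j : ℕ, s ^ j * |f (a * q ^ j)| ≤ Real.sqrt (∑' n : ℕ, q ^ n * f (a * q ^ n) ^ 2) := by
        intro j
        have h1 : q ^ j * f (a * q ^ j) ^ 2 ≤ ∑' n : ℕ, q ^ n * f (a * q ^ n) ^ 2 :=
          Summable.le_tsum hf2 j fun m _ => by positivity
        have h2 : s ^ j * |f (a * q ^ j)| = Real.sqrt (q ^ j * f (a * q ^ j) ^ 2) := by
          rw [Real.sqrt_mul (pow_nonneg hq.le j), Real.sqrt_sq_eq_abs, hsqrtpow j]
        rw [h2]; exact Real.sqrt_le_sqrt h1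
      have hgb : ∀ j : ℕ, s ^ j * |g (a * q ^ j)| ≤ Real.sqrt (∑' n : ℕ, q ^ n * g (a * q ^ n) ^ 2) := by
        intro j
        have h1 : q ^ j * g (a * q ^ j) ^ 2 ≤ ∑' n : ℕ, q ^ n * g (a * q ^ n) ^ 2 :=
          Summable.le_tsum hg2 j fun m _ => by positivity
        have h2 : s ^ j * |g (a * q ^ j)| = Real.sqrt (q ^ j * g (a * q ^ j) ^ 2) := by
          rw [Real.sqrt_mul (pow_nonneg hq.le j), Real.sqrt_sq_eq_abs, hsqrtpow j]
        rw [h2]; exact Real.sqrt_le_sqrt h1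
      set Mf := Real.sqrt (∑' n : ℕ, q ^ n * f (a * q ^ n) ^ 2) with hMf
      set Mg := Real.sqrt (∑' n : ℕ, q ^ n * g (a * q ^ n) ^ 2) with hMg
      have hqss : ∀ n k : ℕ, (q : ℝ) ^ n * q ^ k = s ^ k * (s ^ n * s ^ (n + k)) := by
        intro n k; rw [← hs2]; ring
      have hWs : Summable fun p : ℕ × ℕ => (E * C0 * (Mg * Mf)) * (r ^ p.1 * s ^ p.2) :=
        (Summable.mul_of_nonneg (summable_geometric_of_lt_one hr0 hr1)
          (summable_geometric_of_lt_one hs0.le hs1) (fun n => pow_nonneg hr0 n)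
          (fun k => pow_nonneg hs0.le k)).mul_left _
      refine summable_abs_iff.mp
        (Summable.of_nonneg_of_le (fun p => abs_nonneg _) (fun p => ?_) hWs)
      obtain ⟨n, k⟩ := p
      rw [hTabs n k]
      have hb2 : c k * ((s ^ n * |g (a * q ^ n)|) * (s ^ (n + k) * |f (a * q ^ (n + k))|))
          ≤ C0 * (Mg * Mf) :=
        mul_le_mul (hcb k).2
          (mul_le_mul (hgb n) (hfb (n + k)) (by positivity) (Real.sqrt_nonneg _))
          (by positivity) hC0
      calc E * c k * r ^ n * q ^ n * q ^ k * (|g (a * q ^ n)| * |f (a * q ^ (n + k))|)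
          = E * c k * r ^ n * ((q : ℝ) ^ n * q ^ k) *
              (|g (a * q ^ n)| * |f (a * q ^ (n + k))|) := by ring
        _ = E * c k * r ^ n * (s ^ k * (s ^ n * s ^ (n + k))) *
              (|g (a * q ^ n)| * |f (a * q ^ (n + k))|) := by rw [hqss n k]
        _ = (E * (r ^ n * s ^ k)) *
              (c k * ((s ^ n * |g (a * q ^ n)|) * (s ^ (n + k) * |f (a * q ^ (n + k))|))) := by
            ring
        _ ≤ (E * (r ^ n * s ^ k)) * (C0 * (Mg * Mf)) :=
            mul_le_mul_of_nonneg_left hb2 (by positivity)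
        _ = (E * C0 * (Mg * Mf)) * (r ^ n * s ^ k) := by ring
  -- LHS identity
  have hL : ∀ n : ℕ,
      q ^ n * (g (a * q ^ n) * QFrac.Ileft q α f (a * q ^ n)) = ∑' k : ℕ, T (n, k) := by
    intro n
    have hxne : a * q ^ n ≠ 0 := (hpt n).ne'
    have harg : ∀ k : ℕ, q * (a * q ^ n * q ^ k) / (a * q ^ n) = q ^ (k + 1) := by
      intro k; rw [div_eq_iff hxne]; ring
    have hsum_eq : (∑' k : ℕ, q ^ k *
          (QFrac.poch q (q * (a * q ^ n * q ^ k) / (a * q ^ n)) (α - 1) * f (a * q ^ n * q ^ k)))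
        = ∑' k : ℕ, q ^ k * (c k * f (a * q ^ (n + k))) := by
      refine tsum_congr fun k => ?_
      rw [harg k, show a * q ^ n * q ^ k = a * q ^ (n + k) from by rw [pow_add]; ring]
    have hmul : (∑' k : ℕ, T (n, k)) =
        (q ^ n * g (a * q ^ n) * ((a * q ^ n) ^ (α - 1) / Γ * ((1 - q) * (a * q ^ n)))) *
          ∑' k : ℕ, (q ^ k * (c k * f (a * q ^ (n + k)))) := by
      simp only [hTdef]
      exact tsum_mul_left
    simp only [QFrac.Ileft, QFrac.jackson]
    rw [← hΓdef, hsum_eq, hmul]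
    ring
  -- RHS identity
  have hR : ∀ N : ℕ,
      q ^ N * (f (a * q ^ N) * QFrac.Iright q a α g (a * q ^ N))
        = ∑ m ∈ Finset.range (N + 1), T (m, N - m) := by
    intro N
    have hJ2 : QFrac.jackson q (q * (a * q ^ N))
        (fun t => t ^ (α - 1) * QFrac.poch q (q * (a * q ^ N) / t) (α - 1) * g t) = 0 := by
      simp only [QFrac.jackson]
      have hz0 : ∀ m : ℕ, q ^ m * ((q * (a * q ^ N) * q ^ m) ^ (α - 1) *
          QFrac.poch q (q * (a * q ^ N) / (q * (a * q ^ N) * q ^ m)) (α - 1) *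
          g (q * (a * q ^ N) * q ^ m)) = 0 := by
        intro m
        have hz : (q * (a * q ^ N) / (q * (a * q ^ N) * q ^ m)) * q ^ m = 1 := by
          rw [div_mul_eq_mul_div, div_eq_one_iff_eq (by positivity)]
        rw [QFrac.poch, QFracAux.pochInf_eq_zero m hz, zero_div]
        ring
      rw [tsum_congr hz0, tsum_zero, mul_zero]
    have hzero : ∀ m : ℕ, N + 1 ≤ m →
        QFrac.poch q (q * (a * q ^ N) / (a * q ^ m)) (α - 1) = 0 := by
      intro m hm
      obtain ⟨d, rfl⟩ : ∃ d, m = N + 1 + d := ⟨m - (N + 1), by omega⟩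
      have hz : (q * (a * q ^ N) / (a * q ^ (N + 1 + d))) * q ^ d = 1 := by
        rw [div_mul_eq_mul_div, div_eq_one_iff_eq (hpt _).ne']
        ring
      rw [QFrac.poch, QFracAux.pochInf_eq_zero d hz, zero_div]
    have hts : (∑' m : ℕ, q ^ m * ((a * q ^ m) ^ (α - 1) *
          QFrac.poch q (q * (a * q ^ N) / (a * q ^ m)) (α - 1) * g (a * q ^ m)))
        = ∑ m ∈ Finset.range (N + 1), q ^ m * ((a * q ^ m) ^ (α - 1) *
          QFrac.poch q (q * (a * q ^ N) / (a * q ^ m)) (α - 1) * g (a * q ^ m)) := by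
      refine tsum_eq_sum fun m hm => ?_
      have hm' : N + 1 ≤ m := by
        simp only [Finset.mem_range] at hm; omega
      rw [hzero m hm']; ring
    simp only [QFrac.Iright, QFrac.jacksonI]
    rw [hJ2, sub_zero, ← hΓdef]
    simp only [QFrac.jackson]
    rw [hts, Finset.mul_sum, Finset.mul_sum, Finset.mul_sum, Finset.mul_sum]
    refine Finset.sum_congr rfl fun m hm => ?_
    have hmN : m ≤ N := Nat.lt_succ_iff.mp (Finset.mem_range.mp hm)
    obtain ⟨d, rfl⟩ : ∃ d, N = m + d := ⟨N - m, by omega⟩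
    have harg2 : q * (a * q ^ (m + d)) / (a * q ^ m) = q ^ (d + 1) := by
      field_simp; ring
    rw [harg2, show m + d - m = d from by omega]
    simp only [hTdef, hcdef]
    ring
  -- the reindexing map
  set i : ℕ × ℕ → ℕ × ℕ := fun p => (p.1 + p.2, p.1) with hidef
  have hinj : Function.Injective i := by
    intro p p' hpp
    simp only [hidef, Prod.mk.injEq] at hpp
    obtain ⟨h1, h2⟩ := hpp
    exact Prod.ext h2 (by omega)
  set T' : ℕ × ℕ → ℝ := fun p => if p.2 ≤ p.1 then T (p.2, p.1 - p.2) else 0 with hT'def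
  have hcomp : ∀ p : ℕ × ℕ, T' (i p) = T p := by
    intro p
    simp only [hT'def, hidef]
    rw [if_pos (Nat.le_add_right p.1 p.2), Nat.add_sub_cancel_left]
  have hvanish : ∀ p : ℕ × ℕ, p ∉ Set.range i → T' p = 0 := by
    intro p hp
    simp only [hT'def]
    rw [if_neg]
    intro hle
    exact hp ⟨(p.2, p.1 - p.2), by simp only [hidef]; exact Prod.ext (by omega) rfl⟩
  have hsupp : Function.support T' ⊆ Set.range i := by
    intro p hp
    by_contra hcc
    exact hp (hvanish p hcc)
  have hsumT' : Summable T' := by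
    refine (hinj.summable_iff hvanish).mp ?_
    have hTT : T' ∘ i = T := funext hcomp
    rw [hTT]; exact hsumT
  have htsum_eq : ∑' p : ℕ × ℕ, T p = ∑' p : ℕ × ℕ, T' p := by
    have h5 := hinj.tsum_eq (f := T') hsupp
    rw [← h5]
    exact tsum_congr fun p => (hcomp p).symm
  -- assembly
  simp only [QFrac.jackson]
  congr 1
  calc ∑' n : ℕ, q ^ n * (g (a * q ^ n) * QFrac.Ileft q α f (a * q ^ n))
      = ∑' n : ℕ, ∑' k : ℕ, T (n, k) := tsum_congr hL
    _ = ∑' p : ℕ × ℕ, T p := (Summable.tsum_prod' hsumT hsumT.prod_factor).symm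
    _ = ∑' p : ℕ × ℕ, T' p := htsum_eq
    _ = ∑' N : ℕ, ∑' m : ℕ, T' (N, m) := Summable.tsum_prod' hsumT' hsumT'.prod_factor
    _ = ∑' N : ℕ, ∑ m ∈ Finset.range (N + 1), T (m, N - m) := by
        refine tsum_congr fun N => ?_
        rw [tsum_eq_sum (s := Finset.range (N + 1)) ?_]
        · refine Finset.sum_congr rfl fun m hm => ?_
          simp only [hT'def]
          rw [if_pos (Nat.lt_succ_iff.mp (Finset.mem_range.mp hm))]
        · intro m hm
          simp only [hT'def]
          rw [if_neg]
          simp only [Finset.mem_range] at hm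
          omega
    _ = ∑' N : ℕ, q ^ N * (f (a * q ^ N) * QFrac.Iright q a α g (a * q ^ N)) :=
        tsum_congr fun N => (hR N).symm
end
end

section
/- Let 0 < α < 1. If f is q-absolutely continuous on A*_{q,a}, and g is bounded on A*_{q,a} with D^α_{q,a^-} g ∈ L¹_q(A*_{q,a}), then ∫_0^a g(x) ᶜD^α_{q,0^+} f(x) d_q x = (I^{1−α}_{q,a^-}g)(x/q) f(x)|_{x=0}^a + ∫_0^a f(x) D^α_{q,a^-} g(x) d_q x. -/
open Filter

noncomputable section

namespace Stmt13Aux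
open QFrac Real

variable {q : ℝ}

lemma log_one_sub_ge {x w : ℝ} (hx : 0 ≤ x) (hxw : x ≤ w) (hw : w < 1) :
    -(x / (1 - w)) ≤ Real.log (1 - x) := by
  have h1 : (0:ℝ) < 1 - x := by linarith
  have h2 := Real.log_le_sub_one_of_pos (inv_pos.mpr h1)
  rw [Real.log_inv] at h2
  have h3 : (1 - x)⁻¹ - 1 = x / (1 - x) := by field_simp; ring
  have h4 : x / (1 - x) ≤ x / (1 - w) :=
    div_le_div_of_nonneg_left hx (by linarith) (by linarith)
  linarith

lemma summable_log (hq : 0 < q) (hq1 : q < 1) {z : ℝ} (hz0 : 0 ≤ z) (hz1 : z < 1) :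
    Summable (fun n : ℕ => Real.log (1 - z * q ^ n)) := by
  have hgeo : Summable (fun n : ℕ => z / (1 - z) * q ^ n) :=
    (summable_geometric_of_lt_one hq.le hq1).mul_left _
  refine Summable.of_abs (Summable.of_nonneg_of_le (fun n => abs_nonneg _)
    (fun n => ?_) hgeo)
  have hqn : 0 < q ^ n := pow_pos hq n
  have hqn1 : q ^ n ≤ 1 := pow_le_one₀ hq.le hq1.le
  have hx0 : 0 ≤ z * q ^ n := mul_nonneg hz0 hqn.le
  have hxz : z * q ^ n ≤ z := by nlinarith
  have hge := log_one_sub_ge hx0 hxz hz1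
  have hle : Real.log (1 - z * q ^ n) ≤ 0 :=
    Real.log_nonpos (by nlinarith) (by nlinarith)
  rw [abs_of_nonpos hle]
  have heq : z * q ^ n / (1 - z) = z / (1 - z) * q ^ n := by ring
  rw [heq] at hge
  linarith

lemma pochInf_eq_exp (hq : 0 < q) (hq1 : q < 1) {z : ℝ} (hz0 : 0 ≤ z) (hz1 : z < 1) :
    pochInf q z = Real.exp (∑' n : ℕ, Real.log (1 - z * q ^ n)) := by
  have hpos : ∀ n : ℕ, 0 < 1 - z * q ^ n := by
    intro n
    have hqn : 0 < q ^ n := pow_pos hq n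
    have hqn1 : q ^ n ≤ 1 := pow_le_one₀ hq.le hq1.le
    nlinarith
  have h2 : HasProd (fun n : ℕ => 1 - z * q ^ n)
      (Real.exp (∑' n : ℕ, Real.log (1 - z * q ^ n))) := by
    refine ((summable_log hq hq1 hz0 hz1).hasSum.rexp).congr_fun (fun n => ?_)
    exact (Real.exp_log (hpos n)).symm
  exact h2.tprod_eq

lemma pochInf_le_one (hq : 0 < q) (hq1 : q < 1) {z : ℝ} (hz0 : 0 ≤ z) (hz1 : z < 1) :
    pochInf q z ≤ 1 := by
  rw [pochInf_eq_exp hq hq1 hz0 hz1]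
  apply Real.exp_le_one_iff.2
  have hle : ∀ n : ℕ, Real.log (1 - z * q ^ n) ≤ 0 := by
    intro n
    have hqn : 0 < q ^ n := pow_pos hq n
    have hqn1 : q ^ n ≤ 1 := pow_le_one₀ hq.le hq1.le
    exact Real.log_nonpos (by nlinarith) (by nlinarith)
  have h : (0:ℝ) ≤ ∑' n : ℕ, -Real.log (1 - z * q ^ n) :=
    tsum_nonneg (fun n => by linarith [hle n])
  rw [tsum_neg] at h
  linarith

lemma pochInf_ge (hq : 0 < q) (hq1 : q < 1) {z w : ℝ} (hz0 : 0 ≤ z) (hzw : z ≤ w)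
    (hw : w < 1) :
    Real.exp (-(w / ((1 - q) * (1 - w)))) ≤ pochInf q z := by
  have hz1 : z < 1 := lt_of_le_of_lt hzw hw
  have hw0 : (0:ℝ) < 1 - w := by linarith
  rw [pochInf_eq_exp hq hq1 hz0 hz1]
  apply Real.exp_le_exp.2
  have hsum1 : Summable (fun n : ℕ => -(w / (1 - w)) * q ^ n) :=
    (summable_geometric_of_lt_one hq.le hq1).mul_left _
  have hle : ∀ n : ℕ, -(w / (1 - w)) * q ^ n ≤ Real.log (1 - z * q ^ n) := by
    intro n
    have hqn : 0 < q ^ n := pow_pos hq n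
    have hqn1 : q ^ n ≤ 1 := pow_le_one₀ hq.le hq1.le
    have hx0 : 0 ≤ z * q ^ n := mul_nonneg hz0 hqn.le
    have hxw : z * q ^ n ≤ w := by nlinarith
    have h1 := log_one_sub_ge hx0 hxw hw
    have h2 : -(w / (1 - w)) * q ^ n ≤ -(z * q ^ n / (1 - w)) := by
      rw [neg_mul, neg_le_neg_iff]
      rw [div_mul_eq_mul_div, div_le_div_iff_of_pos_right hw0]
      nlinarith
    linarith
  have h := Summable.tsum_le_tsum hle hsum1 (summable_log hq hq1 hz0 hz1)
  rw [tsum_mul_left, tsum_geometric_of_lt_one hq.le hq1] at h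
  have heq : -(w / (1 - w)) * (1 - q)⁻¹ = -(w / ((1 - q) * (1 - w))) := by
    field_simp
  rw [heq] at h
  exact h

lemma pochInf_zero (r : ℕ) {z : ℝ} (hz : z * q ^ r = 1) : pochInf q z = 0 := by
  have h : HasProd (fun n : ℕ => 1 - z * q ^ n) 0 := by
    have hev : (fun s : Finset ℕ => ∏ i ∈ s, (1 - z * q ^ i)) =ᶠ[atTop]
        (fun _ => (0:ℝ)) := by
      filter_upwards [Filter.eventually_ge_atTop ({r} : Finset ℕ)] with s hs
      refine Finset.prod_eq_zero (hs (Finset.mem_singleton_self r)) ?_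
      rw [hz]; ring
    exact (Tendsto.congr' hev.symm tendsto_const_nhds)
  exact h.tprod_eq

lemma poch_zero (r : ℕ) {z : ℝ} (hz : z * q ^ r = 1) (ν : ℝ) : poch q z ν = 0 := by
  unfold poch
  rw [pochInf_zero r hz, zero_div]

lemma poch_bound (hq : 0 < q) (hq1 : q < 1) {α : ℝ} (hα0 : 0 < α) (hα1 : α < 1) :
    ∃ M : ℝ, 0 < M ∧ ∀ k : ℕ,
      0 ≤ poch q (q ^ (k + 1)) (1 - α - 1) ∧ poch q (q ^ (k + 1)) (1 - α - 1) ≤ M := by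
  have hq1' : (1:ℝ) - q > 0 := by linarith
  set w : ℝ := q ^ ((1:ℝ) - α) with hw
  have hw0 : 0 ≤ w := Real.rpow_nonneg hq.le _
  have hw1 : w < 1 := Real.rpow_lt_one hq.le hq1 (by linarith)
  set δ : ℝ := Real.exp (-(w / ((1 - q) * (1 - w)))) with hδ
  have hδ0 : 0 < δ := Real.exp_pos _
  refine ⟨1 / δ, by positivity, fun k => ?_⟩
  have hz0 : (0:ℝ) ≤ q ^ (k + 1) := (pow_pos hq _).le
  have hzq : q ^ (k + 1) ≤ q := by
    calc q ^ (k + 1) ≤ q ^ 1 := pow_le_pow_of_le_one hq.le hq1.le (by omega)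
    _ = q := pow_one q
  have hz1 : q ^ (k + 1) < 1 := lt_of_le_of_lt hzq hq1
  have hznum0 : 0 ≤ pochInf q (q ^ (k + 1)) :=
    le_trans (Real.exp_pos _).le (pochInf_ge hq hq1 hz0 hzq hq1)
  have hznum1 : pochInf q (q ^ (k + 1)) ≤ 1 := pochInf_le_one hq hq1 hz0 hz1
  have hden : q ^ (k + 1) * q ^ ((1:ℝ) - α - 1) = q ^ ((k:ℝ) + 1 - α) := by
    rw [← Real.rpow_natCast q (k + 1), ← Real.rpow_add hq]
    push_cast
    ring_nf
  have hden0 : (0:ℝ) ≤ q ^ ((k:ℝ) + 1 - α) := Real.rpow_nonneg hq.le _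
  have hdenw : q ^ ((k:ℝ) + 1 - α) ≤ w :=
    Real.rpow_le_rpow_of_exponent_ge hq hq1.le (by push_cast; linarith [Nat.cast_nonneg (α := ℝ) k])
  have hdenδ : δ ≤ pochInf q (q ^ ((k:ℝ) + 1 - α)) := pochInf_ge hq hq1 hden0 hdenw hw1
  constructor
  · unfold poch
    rw [hden]
    exact div_nonneg hznum0 (le_trans hδ0.le hdenδ)
  · unfold poch
    rw [hden]
    exact div_le_div₀ zero_le_one hznum1 hδ0 hdenδ

def dd (q a : ℝ) (f : ℝ → ℝ) (n : ℕ) : ℝ := f (a * q ^ n) - f (a * q ^ (n + 1))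

def cc (q α : ℝ) (k : ℕ) : ℝ := poch q (q ^ (k + 1)) (1 - α - 1)

def FF (q a α : ℝ) (g : ℝ → ℝ) (m : ℕ) : ℝ := Iright q a (1 - α) g (a * q ^ m)

def FFp (q a α : ℝ) (g : ℝ → ℝ) (n : ℕ) : ℝ := Iright q a (1 - α) g (a * q ^ n / q)

def vv (q a α : ℝ) (n : ℕ) : ℝ := q ^ n * (a * q ^ n) ^ ((1:ℝ) - α - 1)

def SS (q a α : ℝ) (g : ℝ → ℝ) (m : ℕ) : ℝ :=
  ∑ j ∈ Finset.range (m + 1),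
    q ^ j * ((a * q ^ j) ^ ((1:ℝ) - α - 1) * cc q α (m - j) * g (a * q ^ j))

def psi (q a α : ℝ) (f g : ℝ → ℝ) (p : ℕ × ℕ) : ℝ :=
  ((qGamma q (1 - α))⁻¹ * (vv q a α p.1 * g (a * q ^ p.1))) *
    (cc q α p.2 * dd q a f (p.1 + p.2))

def phi (q a α : ℝ) (f g : ℝ → ℝ) (p : ℕ × ℕ) : ℝ :=
  if p.2 ≤ p.1 then
    ((qGamma q (1 - α))⁻¹ * (vv q a α p.2 * g (a * q ^ p.2))) *
      (cc q α (p.1 - p.2) * dd q a f p.1)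
  else 0

lemma CD_eq (hq : 0 < q) (hq1 : q < 1) {a : ℝ} (ha : 0 < a) (α : ℝ) (f : ℝ → ℝ) (n : ℕ) :
    CDleft q α f (a * q ^ n) =
      (a * q ^ n) ^ ((1:ℝ) - α - 1) / qGamma q (1 - α) *
        ∑' k : ℕ, cc q α k * dd q a f (n + k) := by
  have hx : a * q ^ n ≠ 0 := (mul_pos ha (pow_pos hq n)).ne'
  have h1q : (1:ℝ) - q ≠ 0 := by linarith
  unfold CDleft Ileft jackson
  have hterm : ∀ k : ℕ,
      q ^ k * (poch q (q * (a * q ^ n * q ^ k) / (a * q ^ n)) (1 - α - 1) *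
        Dq q f (a * q ^ n * q ^ k)) =
      (cc q α k * dd q a f (n + k)) / ((1 - q) * (a * q ^ n)) := by
    intro k
    have hqk : (q:ℝ) ^ k ≠ 0 := pow_ne_zero _ (ne_of_gt hq)
    have harg : q * (a * q ^ n * q ^ k) / (a * q ^ n) = q ^ (k + 1) := by
      field_simp
      ring
    have ht1 : a * q ^ n * q ^ k = a * q ^ (n + k) := by rw [pow_add]; ring
    rw [harg]
    unfold Dq
    rw [ht1]
    have ht2 : q * (a * q ^ (n + k)) = a * q ^ (n + k + 1) := by rw [pow_succ]; ring
    rw [ht2]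
    unfold cc dd
    have h2 : a * q ^ (n + k) ≠ 0 := (mul_pos ha (pow_pos hq _)).ne'
    field_simp
    ring
  rw [tsum_congr hterm, tsum_div_const]
  congr 1
  rw [mul_comm ((1 - q) * (a * q ^ n))]
  exact div_mul_cancel₀ _ (mul_ne_zero h1q hx)


lemma Iright_base (hq : 0 < q) {a : ℝ} (ha : 0 < a) (α : ℝ) (g : ℝ → ℝ) :
    Iright q a (1 - α) g (a / q) = 0 := by
  unfold Iright jacksonI
  rw [show q * (a / q) = a by field_simp]
  simp

lemma FFp_zero (hq : 0 < q) {a : ℝ} (ha : 0 < a) (α : ℝ) (g : ℝ → ℝ) :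
    FFp q a α g 0 = 0 := by
  unfold FFp
  rw [show a * q ^ 0 / q = a / q by simp]
  exact Iright_base hq ha α g

lemma FFp_succ (hq : 0 < q) {a : ℝ} (α : ℝ) (g : ℝ → ℝ) (n : ℕ) :
    FFp q a α g (n + 1) = FF q a α g n := by
  unfold FFp FF
  rw [show a * q ^ (n + 1) / q = a * q ^ n by rw [pow_succ]; field_simp]

lemma FF_eq (hq : 0 < q) (hq1 : q < 1) {a : ℝ} (ha : 0 < a) (α : ℝ) (g : ℝ → ℝ) (m : ℕ) :
    FF q a α g m = (qGamma q (1 - α))⁻¹ * ((1 - q) * a * SS q a α g m) := by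
  have hq0 : q ≠ 0 := ne_of_gt hq
  have ha0 : a ≠ 0 := ne_of_gt ha
  unfold FF Iright jacksonI jackson SS
  have hvan : ∀ j : ℕ, m + 1 ≤ j →
      poch q (q * (a * q ^ m) / (a * q ^ j)) (1 - α - 1) = 0 := by
    intro j hj
    apply poch_zero (j - (m + 1))
    have hpow : a * q ^ j = a * ((q * q ^ m) * q ^ (j - (m + 1))) := by
      rw [← pow_succ', ← pow_add]
      congr 2
      omega
    rw [hpow]
    field_simp
  have hz2 : ∀ i : ℕ,
      q ^ i * ((q * (a * q ^ m) * q ^ i) ^ ((1:ℝ) - α - 1) *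
        poch q (q * (a * q ^ m) / (q * (a * q ^ m) * q ^ i)) (1 - α - 1) *
        g (q * (a * q ^ m) * q ^ i)) = 0 := by
    intro i
    have harg : q * (a * q ^ m) * q ^ i = a * q ^ (m + 1 + i) := by
      rw [pow_add, pow_succ]
      ring
    rw [harg, hvan (m + 1 + i) (by omega)]
    ring
  rw [tsum_congr hz2, tsum_zero, mul_zero, sub_zero]
  have hsum : ∑' j : ℕ, q ^ j * ((a * q ^ j) ^ ((1:ℝ) - α - 1) *
      poch q (q * (a * q ^ m) / (a * q ^ j)) (1 - α - 1) * g (a * q ^ j)) =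
      ∑ j ∈ Finset.range (m + 1), q ^ j * ((a * q ^ j) ^ ((1:ℝ) - α - 1) *
        cc q α (m - j) * g (a * q ^ j)) := by
    rw [tsum_eq_sum (s := Finset.range (m + 1)) (by
      intro j hj
      rw [hvan j (by simpa [Nat.lt_succ_iff] using hj)]
      ring)]
    apply Finset.sum_congr rfl
    intro j hj
    have hjm : j ≤ m := by simpa [Nat.lt_succ_iff] using hj
    have harg : q * (a * q ^ m) / (a * q ^ j) = q ^ (m - j + 1) := by
      have hpow : q * (a * q ^ m) = a * q ^ j * q ^ (m - j + 1) := by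
        rw [mul_assoc, ← pow_add]
        have : j + (m - j + 1) = m + 1 := by omega
        rw [this, pow_succ]
        ring
      rw [hpow]
      field_simp
    rw [harg]
    rfl
  rw [hsum]

lemma DRL_eq (hq : 0 < q) (hq1 : q < 1) {a : ℝ} (ha : 0 < a) (α : ℝ) (f g : ℝ → ℝ) (n : ℕ) :
    (1 - q) * a * (q ^ n * (f (a * q ^ n) * DRLright q a α g (a * q ^ n))) =
      f (a * q ^ n) * (FF q a α g n - FFp q a α g n) := by
  have hq0 : q ≠ 0 := ne_of_gt hq
  have ha0 : a ≠ 0 := ne_of_gt ha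
  have h1q : (1:ℝ) - q ≠ 0 := by intro h; linarith
  have hqi : (1:ℝ) < q⁻¹ := (one_lt_inv₀ hq).mpr hq1
  unfold DRLright Dqinv FF FFp
  have hqn : (q:ℝ) ^ n ≠ 0 := pow_ne_zero _ hq0
  rw [inv_eq_one_div] at hqi ⊢
  have h1q' : q - 1 ≠ 0 := by intro h; linarith
  field_simp
  ring

lemma v_eq (hq : 0 < q) {a : ℝ} (ha : 0 < a) (α : ℝ) (n : ℕ) :
    q ^ n * (a * q ^ n) ^ ((1:ℝ) - α - 1) =
      a ^ ((1:ℝ) - α - 1) * (q ^ ((1:ℝ) - α)) ^ n := by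
  rw [Real.mul_rpow ha.le (pow_nonneg hq.le n)]
  rw [← Real.rpow_natCast q n, ← Real.rpow_mul hq.le, ← Real.rpow_natCast (q ^ ((1:ℝ) - α)) n,
    ← Real.rpow_mul hq.le]
  rw [mul_left_comm, ← Real.rpow_add hq]
  congr 1
  ring

end Stmt13Aux


/-- integration by parts for the left Caputo q-derivative and the
right Riemann–Liouville q-derivative; `Ig0 = (I^{1-α}_{q,a^-}g)(x/q)|_{x=0}`
is the q-regular value at zero. -/
theorem stmt13 (q a α : ℝ) (hq : 0 < q) (hq1 : q < 1) (ha : 0 < a)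
    (hα0 : 0 < α) (hα1 : α < 1) (f g : ℝ → ℝ)
    (hf : QFrac.qAC q a f)
    (hg : ∃ C : ℝ, (∀ n : ℕ, |g (a * q ^ n)| ≤ C) ∧ |g 0| ≤ C)
    (hDg : QFrac.MemL1 q a (QFrac.DRLright q a α g)) (Ig0 : ℝ)
    (hlim : Filter.Tendsto (fun n : ℕ => QFrac.Iright q a (1 - α) g (a * q ^ n / q))
      Filter.atTop (nhds Ig0)) :
    QFrac.jackson q a (fun x => g x * QFrac.CDleft q α f x) =
      (QFrac.Iright q a (1 - α) g (a / q) * f a - Ig0 * f 0) +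
        QFrac.jackson q a (fun x => f x * QFrac.DRLright q a α g x) := by
  classical
  obtain ⟨hreg, K, hK⟩ := hf
  obtain ⟨C, hgC, -⟩ := hg
  obtain ⟨M, hM0, hMb⟩ := Stmt13Aux.poch_bound hq hq1 (α := α) hα0 hα1
  have hq0 : q ≠ 0 := ne_of_gt hq
  have hMb' : ∀ k : ℕ, 0 ≤ Stmt13Aux.cc q α k ∧ Stmt13Aux.cc q α k ≤ M := fun k => hMb k
  have h1q : (0:ℝ) < 1 - q := by linarith
  have hC0 : 0 ≤ C := le_trans (abs_nonneg _) (hgC 0)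
  have hK0 : 0 ≤ K := le_trans (abs_nonneg _) (by simpa using hK 0 1)
  -- summability of the increments
  have hdsum : Summable (fun n : ℕ => |Stmt13Aux.dd q a f n|) := by
    apply summable_of_sum_range_le (c := K) (fun n => abs_nonneg _)
    intro N
    simpa [Stmt13Aux.dd] using hK 0 N
  have hdshift : ∀ n : ℕ, Summable (fun k : ℕ => |Stmt13Aux.dd q a f (n + k)|) := by
    intro n
    exact ((summable_nat_add_iff n).2 hdsum).congr (fun k => by rw [Nat.add_comm])
  have hdtail : ∀ n : ℕ, (∑' k : ℕ, |Stmt13Aux.dd q a f (n + k)|) ≤ K := by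
    intro n
    apply Real.tsum_le_of_sum_range_le (fun k => abs_nonneg _)
    intro N
    simpa [Stmt13Aux.dd, add_assoc] using hK n N
  -- bound for f on the grid
  have hBf : ∀ n : ℕ, |f (a * q ^ n)| ≤ |f a| + K := by
    intro n
    have h1 : ∑ j ∈ Finset.range n, (f (a * q ^ j) - f (a * q ^ (j + 1))) =
        f (a * q ^ 0) - f (a * q ^ n) := Finset.sum_range_sub' (fun j => f (a * q ^ j)) n
    have h2 : |∑ j ∈ Finset.range n, (f (a * q ^ j) - f (a * q ^ (j + 1)))| ≤ K := by
      refine le_trans (Finset.abs_sum_le_sum_abs _ _) ?_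
      simpa using hK 0 n
    rw [h1, pow_zero, mul_one] at h2
    have h3 := abs_sub_abs_le_abs_sub (f (a * q ^ n)) (f a)
    rw [abs_sub_comm] at h3
    linarith
  have hBf0 : (0:ℝ) ≤ |f a| + K := add_nonneg (abs_nonneg _) hK0
  -- values of the right fractional integral
  have hFS : ∀ m : ℕ, Stmt13Aux.FF q a α g m =
      (QFrac.qGamma q (1 - α))⁻¹ * ((1 - q) * a * Stmt13Aux.SS q a α g m) :=
    fun m => Stmt13Aux.FF_eq hq hq1 ha α g m
  -- limit of F
  have hFlim : Filter.Tendsto (fun n : ℕ => Stmt13Aux.FF q a α g n) Filter.atTop (nhds Ig0) := by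
    have h1 : Filter.Tendsto
        ((fun n : ℕ => QFrac.Iright q a (1 - α) g (a * q ^ n / q)) ∘ (fun n : ℕ => n + 1))
        Filter.atTop (nhds Ig0) := hlim.comp (tendsto_add_atTop_nat 1)
    refine h1.congr (fun n => ?_)
    exact Stmt13Aux.FFp_succ hq α g n
  -- bound for F
  obtain ⟨BF, hBF⟩ := (hFlim.abs).bddAbove_range
  have hBFle : ∀ m : ℕ, |Stmt13Aux.FF q a α g m| ≤ BF := fun m => hBF ⟨m, rfl⟩
  -- summability of dd * FF
  have hsumdF : Summable (fun m : ℕ => Stmt13Aux.dd q a f m * Stmt13Aux.FF q a α g m) := by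
    apply Summable.of_abs
    apply Summable.of_nonneg_of_le (fun m => abs_nonneg _) (fun m => ?_) (hdsum.mul_left BF)
    rw [abs_mul]
    have := hBFle m
    have := abs_nonneg (Stmt13Aux.dd q a f m)
    nlinarith
  -- ===== RHS =====
  have hRHSterm : ∀ n : ℕ, f (a * q ^ n) *
      (Stmt13Aux.FF q a α g n - Stmt13Aux.FFp q a α g n) =
      (1 - q) * a * (q ^ n * (f (a * q ^ n) * QFrac.DRLright q a α g (a * q ^ n))) :=
    fun n => (Stmt13Aux.DRL_eq hq hq1 ha α f g n).symm
  have hRS : Summable (fun n : ℕ => q ^ n * (f (a * q ^ n) * QFrac.DRLright q a α g (a * q ^ n))) := by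
    apply Summable.of_abs
    apply Summable.of_nonneg_of_le (fun n => abs_nonneg _) (fun n => ?_) (hDg.mul_left (|f a| + K))
    rw [abs_mul, abs_mul, abs_of_nonneg (pow_nonneg hq.le n)]
    have h2 := abs_nonneg (QFrac.DRLright q a α g (a * q ^ n))
    have h3 : (0:ℝ) ≤ q ^ n := pow_nonneg hq.le n
    calc q ^ n * (|f (a * q ^ n)| * |QFrac.DRLright q a α g (a * q ^ n)|)
        = |f (a * q ^ n)| * (q ^ n * |QFrac.DRLright q a α g (a * q ^ n)|) := by ring
      _ ≤ (|f a| + K) * (q ^ n * |QFrac.DRLright q a α g (a * q ^ n)|) :=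
          mul_le_mul_of_nonneg_right (hBf n) (mul_nonneg h3 h2)
  have hSumRS : Summable (fun n : ℕ => f (a * q ^ n) *
      (Stmt13Aux.FF q a α g n - Stmt13Aux.FFp q a α g n)) := by
    refine (hRS.mul_left ((1 - q) * a)).congr (fun n => ?_)
    exact (hRHSterm n).symm
  have hjackR : QFrac.jackson q a (fun x => f x * QFrac.DRLright q a α g x) =
      ∑' n : ℕ, f (a * q ^ n) * (Stmt13Aux.FF q a α g n - Stmt13Aux.FFp q a α g n) := by
    unfold QFrac.jackson
    rw [← tsum_mul_left]
    exact (tsum_congr (fun n => by simpa using hRHSterm n)).symm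
  -- Abel summation
  have habel : ∀ N : ℕ, ∑ n ∈ Finset.range (N + 1),
      f (a * q ^ n) * (Stmt13Aux.FF q a α g n - Stmt13Aux.FFp q a α g n) =
      f (a * q ^ N) * Stmt13Aux.FF q a α g N +
        ∑ n ∈ Finset.range N, Stmt13Aux.dd q a f n * Stmt13Aux.FF q a α g n := by
    intro N
    induction N with
    | zero => simp [Stmt13Aux.FFp_zero hq ha α g]
    | succ N ih =>
      rw [Finset.sum_range_succ, ih, Finset.sum_range_succ, Stmt13Aux.FFp_succ hq α g N]
      simp only [Stmt13Aux.dd]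
      ring
  have hval : ∑' n : ℕ, f (a * q ^ n) * (Stmt13Aux.FF q a α g n - Stmt13Aux.FFp q a α g n) =
      f 0 * Ig0 + ∑' m : ℕ, Stmt13Aux.dd q a f m * Stmt13Aux.FF q a α g m := by
    have h2 : Filter.Tendsto ((fun N : ℕ => ∑ n ∈ Finset.range N,
        f (a * q ^ n) * (Stmt13Aux.FF q a α g n - Stmt13Aux.FFp q a α g n)) ∘ (fun N => N + 1))
        Filter.atTop (nhds (∑' n : ℕ, f (a * q ^ n) *
          (Stmt13Aux.FF q a α g n - Stmt13Aux.FFp q a α g n))) :=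
      (hSumRS.hasSum.tendsto_sum_nat).comp (tendsto_add_atTop_nat 1)
    have h3 : Filter.Tendsto (fun N : ℕ => f (a * q ^ N) * Stmt13Aux.FF q a α g N +
        ∑ n ∈ Finset.range N, Stmt13Aux.dd q a f n * Stmt13Aux.FF q a α g n)
        Filter.atTop (nhds (f 0 * Ig0 +
          ∑' m : ℕ, Stmt13Aux.dd q a f m * Stmt13Aux.FF q a α g m)) :=
      (hreg.mul hFlim).add (hsumdF.hasSum.tendsto_sum_nat)
    exact tendsto_nhds_unique (h2.congr habel) h3
  -- ===== LHS =====
  have hv0 : ∀ n : ℕ, 0 ≤ Stmt13Aux.vv q a α n := by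
    intro n
    unfold Stmt13Aux.vv
    have := (mul_pos ha (pow_pos hq n)).le
    positivity
  have hvsum : Summable (fun n : ℕ => Stmt13Aux.vv q a α n) := by
    have h1 : ∀ n : ℕ, Stmt13Aux.vv q a α n =
        a ^ ((1:ℝ) - α - 1) * (q ^ ((1:ℝ) - α)) ^ n := fun n => Stmt13Aux.v_eq hq ha α n
    refine Summable.congr ?_ (fun n => (h1 n).symm)
    exact (summable_geometric_of_lt_one (Real.rpow_nonneg hq.le _)
      (Real.rpow_lt_one hq.le hq1 (by linarith))).mul_left _
  have habsψ : ∀ p : ℕ × ℕ, |Stmt13Aux.psi q a α f g p| ≤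
      (|(QFrac.qGamma q (1 - α))⁻¹| * C * M) * (Stmt13Aux.vv q a α p.1 * |Stmt13Aux.dd q a f (p.1 + p.2)|) := by
    intro p
    have e1 : |Stmt13Aux.psi q a α f g p| =
        |(QFrac.qGamma q (1 - α))⁻¹| * (Stmt13Aux.vv q a α p.1 * |g (a * q ^ p.1)|) *
          (Stmt13Aux.cc q α p.2 * |Stmt13Aux.dd q a f (p.1 + p.2)|) := by
      unfold Stmt13Aux.psi
      rw [abs_mul, abs_mul, abs_mul, abs_mul, abs_of_nonneg (hv0 p.1),
        abs_of_nonneg (hMb' p.2).1]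
    rw [e1]
    have hb1 : Stmt13Aux.vv q a α p.1 * |g (a * q ^ p.1)| ≤ Stmt13Aux.vv q a α p.1 * C :=
      mul_le_mul_of_nonneg_left (hgC p.1) (hv0 p.1)
    have hb2 : Stmt13Aux.cc q α p.2 * |Stmt13Aux.dd q a f (p.1 + p.2)| ≤
        M * |Stmt13Aux.dd q a f (p.1 + p.2)| :=
      mul_le_mul_of_nonneg_right (hMb' p.2).2 (abs_nonneg _)
    have hb3 := mul_le_mul
      (mul_le_mul_of_nonneg_left hb1 (abs_nonneg ((QFrac.qGamma q (1 - α))⁻¹))) hb2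
      (mul_nonneg (hMb' p.2).1 (abs_nonneg _))
      (mul_nonneg (abs_nonneg _) (mul_nonneg (hv0 p.1) hC0))
    calc |(QFrac.qGamma q (1 - α))⁻¹| * (Stmt13Aux.vv q a α p.1 * |g (a * q ^ p.1)|) *
          (Stmt13Aux.cc q α p.2 * |Stmt13Aux.dd q a f (p.1 + p.2)|)
        ≤ |(QFrac.qGamma q (1 - α))⁻¹| * (Stmt13Aux.vv q a α p.1 * C) *
          (M * |Stmt13Aux.dd q a f (p.1 + p.2)|) := hb3
      _ = (|(QFrac.qGamma q (1 - α))⁻¹| * C * M) *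
          (Stmt13Aux.vv q a α p.1 * |Stmt13Aux.dd q a f (p.1 + p.2)|) := by ring
  have hsliceb : ∀ n : ℕ, Summable (fun k : ℕ =>
      (|(QFrac.qGamma q (1 - α))⁻¹| * C * M) * (Stmt13Aux.vv q a α n * |Stmt13Aux.dd q a f (n + k)|)) :=
    fun n => ((hdshift n).mul_left _).mul_left _
  have hslice : ∀ n : ℕ, Summable (fun k : ℕ => |Stmt13Aux.psi q a α f g (n, k)|) := by
    intro n
    exact Summable.of_nonneg_of_le (fun k => abs_nonneg _) (fun k => habsψ (n, k)) (hsliceb n)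
  have hψabs : Summable (fun p : ℕ × ℕ => |Stmt13Aux.psi q a α f g p|) := by
    rw [summable_prod_of_nonneg (fun p => abs_nonneg _)]
    refine ⟨hslice, ?_⟩
    apply Summable.of_nonneg_of_le (fun n => tsum_nonneg (fun k => abs_nonneg _)) (fun n => ?_)
      ((hvsum.mul_left (|(QFrac.qGamma q (1 - α))⁻¹| * C * M * K)))
    calc (∑' k : ℕ, |Stmt13Aux.psi q a α f g (n, k)|)
        ≤ ∑' k : ℕ, (|(QFrac.qGamma q (1 - α))⁻¹| * C * M) *
            (Stmt13Aux.vv q a α n * |Stmt13Aux.dd q a f (n + k)|) :=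
          Summable.tsum_le_tsum (fun k => habsψ (n, k)) (hslice n) (hsliceb n)
      _ = ((|(QFrac.qGamma q (1 - α))⁻¹| * C * M) * Stmt13Aux.vv q a α n) *
            ∑' k : ℕ, |Stmt13Aux.dd q a f (n + k)| := by
          rw [tsum_mul_left, tsum_mul_left]
          ring
      _ ≤ ((|(QFrac.qGamma q (1 - α))⁻¹| * C * M) * Stmt13Aux.vv q a α n) * K := by
          apply mul_le_mul_of_nonneg_left (hdtail n)
          exact mul_nonneg (mul_nonneg (mul_nonneg (abs_nonneg _) hC0) hM0.le) (hv0 n)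
      _ = (|(QFrac.qGamma q (1 - α))⁻¹| * C * M * K) * Stmt13Aux.vv q a α n := by ring
  have hψsum : Summable (fun p : ℕ × ℕ => Stmt13Aux.psi q a α f g p) := hψabs.of_abs
  -- LHS as a double sum
  have hterm1 : ∀ n : ℕ, q ^ n * (g (a * q ^ n) * QFrac.CDleft q α f (a * q ^ n)) =
      ∑' k : ℕ, Stmt13Aux.psi q a α f g (n, k) := by
    intro n
    rw [Stmt13Aux.CD_eq hq hq1 ha α f n]
    have e1 : q ^ n * (g (a * q ^ n) * ((a * q ^ n) ^ ((1:ℝ) - α - 1) / QFrac.qGamma q (1 - α) *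
        ∑' k : ℕ, Stmt13Aux.cc q α k * Stmt13Aux.dd q a f (n + k))) =
        ((QFrac.qGamma q (1 - α))⁻¹ * (Stmt13Aux.vv q a α n * g (a * q ^ n))) *
          ∑' k : ℕ, Stmt13Aux.cc q α k * Stmt13Aux.dd q a f (n + k) := by
      unfold Stmt13Aux.vv
      rw [div_eq_mul_inv]
      ring
    rw [e1, ← tsum_mul_left]
    exact tsum_congr (fun k => rfl)
  have hLHS1 : QFrac.jackson q a (fun x => g x * QFrac.CDleft q α f x) =
      (1 - q) * a * ∑' p : ℕ × ℕ, Stmt13Aux.psi q a α f g p := by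
    unfold QFrac.jackson
    congr 1
    rw [Summable.tsum_prod hψsum]
    exact tsum_congr (fun n => by simpa using hterm1 n)
  -- reindex the double sum
  have he : Function.Injective (fun p : ℕ × ℕ => (p.1 + p.2, p.1)) := by
    intro p p' h
    simp only [Prod.mk.injEq] at h
    obtain ⟨h1, h2⟩ := h
    exact Prod.ext h2 (by omega)
  have hφe : ∀ p : ℕ × ℕ,
      Stmt13Aux.phi q a α f g ((fun p : ℕ × ℕ => (p.1 + p.2, p.1)) p) =
        Stmt13Aux.psi q a α f g p := by
    intro p
    unfold Stmt13Aux.phi Stmt13Aux.psi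
    simp only [Nat.le_add_right, if_true, Nat.add_sub_cancel_left]
  have hsupp : Function.support (Stmt13Aux.phi q a α f g) ⊆
      Set.range (fun p : ℕ × ℕ => (p.1 + p.2, p.1)) := by
    intro p hp
    simp only [Function.mem_support] at hp
    by_cases h : p.2 ≤ p.1
    · exact ⟨(p.2, p.1 - p.2), Prod.ext (by simp; omega) rfl⟩
    · exfalso
      apply hp
      unfold Stmt13Aux.phi
      rw [if_neg h]
  have hreindex : ∑' p : ℕ × ℕ, Stmt13Aux.psi q a α f g p =
      ∑' p : ℕ × ℕ, Stmt13Aux.phi q a α f g p := by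
    rw [← he.tsum_eq hsupp]
    exact tsum_congr (fun p => (hφe p).symm)
  have hφsum : Summable (Stmt13Aux.phi q a α f g) := by
    refine (he.summable_iff (fun x hx => ?_)).1 (hψsum.congr (fun p => (hφe p).symm))
    by_contra h
    exact hx (hsupp (Function.mem_support.mpr h))
  have hφval : ∑' p : ℕ × ℕ, Stmt13Aux.phi q a α f g p =
      ∑' m : ℕ, Stmt13Aux.dd q a f m *
        ((QFrac.qGamma q (1 - α))⁻¹ * Stmt13Aux.SS q a α g m) := by
    rw [Summable.tsum_prod hφsum]
    apply tsum_congr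
    intro m
    rw [tsum_eq_sum (s := Finset.range (m + 1)) (f := fun n => Stmt13Aux.phi q a α f g (m, n))
      (fun n hn => by
        simp only [Stmt13Aux.phi]
        rw [if_neg (by simp only [Finset.mem_range, Nat.lt_succ_iff] at hn; omega)])]
    unfold Stmt13Aux.SS
    rw [Finset.mul_sum, Finset.mul_sum]
    apply Finset.sum_congr rfl
    intro j hj
    simp only [Stmt13Aux.phi]
    rw [if_pos (by simp only [Finset.mem_range, Nat.lt_succ_iff] at hj; omega)]
    unfold Stmt13Aux.vv
    ring
  have hΔFval : ∑' m : ℕ, Stmt13Aux.dd q a f m * Stmt13Aux.FF q a α g m =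
      (1 - q) * a * ∑' m : ℕ, Stmt13Aux.dd q a f m *
        ((QFrac.qGamma q (1 - α))⁻¹ * Stmt13Aux.SS q a α g m) := by
    rw [← tsum_mul_left]
    apply tsum_congr
    intro m
    rw [hFS m]
    ring
  -- ===== conclusion =====
  calc QFrac.jackson q a (fun x => g x * QFrac.CDleft q α f x)
      = (1 - q) * a * ∑' p : ℕ × ℕ, Stmt13Aux.psi q a α f g p := hLHS1
    _ = (1 - q) * a * ∑' p : ℕ × ℕ, Stmt13Aux.phi q a α f g p := by rw [hreindex]
    _ = (1 - q) * a * ∑' m : ℕ, Stmt13Aux.dd q a f m *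
          ((QFrac.qGamma q (1 - α))⁻¹ * Stmt13Aux.SS q a α g m) := by rw [hφval]
    _ = ∑' m : ℕ, Stmt13Aux.dd q a f m * Stmt13Aux.FF q a α g m := hΔFval.symm
    _ = 0 * f a - Ig0 * f 0 + (f 0 * Ig0 +
          ∑' m : ℕ, Stmt13Aux.dd q a f m * Stmt13Aux.FF q a α g m) := by ring
    _ = (QFrac.Iright q a (1 - α) g (a / q) * f a - Ig0 * f 0) +
          QFrac.jackson q a (fun x => f x * QFrac.DRLright q a α g x) := by
        rw [Stmt13Aux.Iright_base hq ha α g, hjackR, hval]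
end
end
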